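/- arXiv:1802.02538 — 2 statements merged into one kernel-verified Lean document; each statement's English description precedes it below -/
import Mathlib

section
/- Let p and q be probability density functions on ℝ^K with q(θ) > 0 wherever p(θ) > 0. For any coordinate index i and any real α > 1, if the α-th moment of the importance ratio is finite, i.e., ∫ (p(θ)/q(θ))^α q(θ) dθ < ∞, then the α-th moment of the marginal importance ratio is also finite: ∫ (p_i(θ_i)/q_i(θ_i))^α q_i(θ_i) dθ_i < ∞, where p_i and q_i denote the i-th marginal densities of p and q. -/
open MeasureTheory ENNReal

/-- The `i`-th marginal density of a density on `ℝ^K`: integrate out all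
coordinates except the `i`-th one. -/
noncomputable def marginalDensity {K : ℕ} (i : Fin K) (p : (Fin K → ℝ) → ℝ≥0∞) (t : ℝ) : ℝ≥0∞ :=
  MeasureTheory.lmarginal (fun _ : Fin K => (volume : Measure ℝ)) ({i}ᶜ : Finset (Fin K)) p
    (fun _ => t)

section Aux

variable {K : ℕ}

private lemma marg_measurable (i : Fin K) {f : (Fin K → ℝ) → ℝ≥0∞} (hf : Measurable f) :
    Measurable (marginalDensity i f) := by
  have h : marginalDensity i f =
      (MeasureTheory.lmarginal (fun _ : Fin K => (volume : Measure ℝ)) ({i}ᶜ) f) ∘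
        (fun t : ℝ => (fun _ : Fin K => t)) := rfl
  rw [h]
  exact (hf.lmarginal _).comp (measurable_pi_lambda _ fun _ => measurable_id)

private lemma marg_apply (i : Fin K) (f : (Fin K → ℝ) → ℝ≥0∞) (t : ℝ) :
    marginalDensity i f t =
      MeasureTheory.lmarginal (fun _ : Fin K => (volume : Measure ℝ)) ({i}ᶜ) f
        (Function.update (fun _ => (0:ℝ)) i t) := by
  apply MeasureTheory.lmarginal_congr
  intro j hj
  have hji : j = i := by simpa using hj
  subst hji
  simp

/-- Fubini for the marginal. -/
private lemma marg_lintegral (i : Fin K) {f : (Fin K → ℝ) → ℝ≥0∞} (hf : Measurable f) :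
    ∫⁻ t : ℝ, marginalDensity i f t = ∫⁻ θ, f θ := by
  simp_rw [marg_apply i f]
  have h := MeasureTheory.lmarginal_insert (μ := fun _ : Fin K => (volume : Measure ℝ)) f hf
    (Finset.notMem_compl.2 (Finset.mem_singleton_self i)) (fun _ => (0:ℝ))
  rw [Finset.insert_compl_self, MeasureTheory.lmarginal_univ] at h
  rw [← volume_pi] at h
  exact h.symm

private lemma marg_mono (i : Fin K) {f g : (Fin K → ℝ) → ℝ≥0∞} (hfg : ∀ θ, f θ ≤ g θ) (t : ℝ) :
    marginalDensity i f t ≤ marginalDensity i g t :=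
  MeasureTheory.lmarginal_mono hfg _

/-- If two measurable densities agree a.e., so do their marginals, for a.e. `t`. -/
private lemma marg_congr_ae (i : Fin K) {f g : (Fin K → ℝ) → ℝ≥0∞}
    (hf : Measurable f) (hg : Measurable g) (hfg : f =ᵐ[volume] g) :
    ∀ᵐ t : ℝ, marginalDensity i f t = marginalDensity i g t := by
  set d : (Fin K → ℝ) → ℝ≥0∞ := fun θ => (f θ - g θ) + (g θ - f θ) with hd
  have hdm : Measurable d := (hf.sub hg).add (hg.sub hf)
  have hd0 : d =ᵐ[volume] 0 := by
    filter_upwards [hfg] with θ hθ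
    simp [d, hθ]
  have hdi : ∫⁻ t : ℝ, marginalDensity i d t = 0 := by
    rw [marg_lintegral i hdm, lintegral_congr_ae hd0]
    simp
  have h0 : ∀ᵐ t : ℝ, marginalDensity i d t = 0 :=
    (lintegral_eq_zero_iff (marg_measurable i hdm)).1 hdi
  filter_upwards [h0] with t ht
  have hu : Measurable fun y : (∀ j : ({i}ᶜ : Finset (Fin K)), ℝ) =>
      Function.updateFinset (fun _ => t) ({i}ᶜ : Finset (Fin K)) y := measurable_updateFinset
  have ht' : ∫⁻ y, d (Function.updateFinset (fun _ => t) ({i}ᶜ : Finset (Fin K)) y)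
      ∂(Measure.pi fun _ : ({i}ᶜ : Finset (Fin K)) => (volume : Measure ℝ)) = 0 := ht
  have hae := (lintegral_eq_zero_iff (hdm.comp hu)).1 ht'
  refine lintegral_congr_ae ?_
  filter_upwards [hae] with y hy
  have h1 : f (Function.updateFinset (fun _ => t) ({i}ᶜ : Finset (Fin K)) y)
      = g (Function.updateFinset (fun _ => t) ({i}ᶜ : Finset (Fin K)) y) := by
    simp only [Function.comp_apply, d, Pi.zero_apply, add_eq_zero, tsub_eq_zero_iff_le] at hy
    exact le_antisymm hy.1 hy.2
  rw [h1]

/-- arithmetic: from the Hölder bound to the Jensen-type bound. -/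
private lemma arith {α : ℝ} (hα : 1 < α) {P A B : ℝ≥0∞} (hB : B ≠ ⊤)
    (h : P ≤ A ^ (1/α) * B ^ (1/Real.conjExponent α)) :
    (P / B) ^ α * B ≤ A := by
  have hc := Real.HolderConjugate.conjExponent hα
  have hα0 : (0:ℝ) ≤ α := by linarith
  have hαne : α ≠ 0 := by positivity
  rcases eq_or_ne B 0 with hB0 | hB0
  · simp [hB0]
  rcases eq_or_ne A ⊤ with hA | hA
  · simp [hA]
  have key : (P / B) ^ α * B ≤ (A ^ (1/α) * B ^ (1/Real.conjExponent α) / B) ^ α * B := by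
    gcongr
  refine key.trans ?_
  have hBα0 : B ^ α ≠ 0 := by
    simp [ENNReal.rpow_eq_zero_iff, hB0, hB]
  have hBαt : B ^ α ≠ ⊤ := by
    simp [ENNReal.rpow_eq_top_iff, hB0, hB]
  have hexp : 1 / Real.conjExponent α * α = α - 1 := by
    rw [Real.conjExponent]
    field_simp
  have e1 : (A ^ (1/α) * B ^ (1/Real.conjExponent α) / B) ^ α
      = A * B ^ (α - 1) / B ^ α := by
    rw [ENNReal.div_rpow_of_nonneg _ _ hα0, ENNReal.mul_rpow_of_nonneg _ _ hα0,
      ← ENNReal.rpow_mul, ← ENNReal.rpow_mul, one_div_mul_cancel hαne, ENNReal.rpow_one, hexp]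
  rw [e1]
  have e2 : B ^ (α-1) * B = B ^ α := by
    nth_rewrite 2 [← ENNReal.rpow_one B]
    rw [← ENNReal.rpow_add _ _ hB0 hB]
    norm_num
  calc A * B ^ (α-1) / B ^ α * B = A * (B ^ (α-1) * B) * (B ^ α)⁻¹ := by
        rw [div_eq_mul_inv]; ring
    _ = A * (B ^ α * (B ^ α)⁻¹) := by rw [e2, mul_assoc]
    _ = A := by rw [ENNReal.mul_inv_cancel hBα0 hBαt, mul_one]
    _ ≤ A := le_rfl

private lemma mul_helper {α : ℝ} (hα : 1 < α) (a c : ℝ≥0∞) :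
    (c / a * a ^ (1/α)) * a ^ (1/Real.conjExponent α) = c / a * a := by
  have hc := Real.HolderConjugate.conjExponent hα
  have h1 : (0:ℝ) < 1/α := by positivity
  have h2 : (0:ℝ) < 1/Real.conjExponent α := hc.symm.one_div_pos
  rcases eq_or_ne a 0 with rfl | ha0
  · have h3 : 0 < Real.conjExponent α := hc.symm.pos
    simp [ENNReal.zero_rpow_of_pos h1, ENNReal.zero_rpow_of_pos h2, h3]
  rcases eq_or_ne a ⊤ with rfl | hat
  · simp [ENNReal.div_top, ENNReal.top_rpow_of_pos h1, ENNReal.top_rpow_of_pos h2]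
  rw [mul_assoc, ← ENNReal.rpow_add _ _ ha0 hat]
  have : 1/α + 1/Real.conjExponent α = 1 := by
    simpa [one_div] using hc.inv_add_inv_eq_one
  rw [this, ENNReal.rpow_one]

private lemma pow_helper {α : ℝ} (hα : 1 < α) (a x : ℝ≥0∞) :
    (x * a ^ (1/α)) ^ α = x ^ α * a := by
  have hα0 : (0:ℝ) ≤ α := by linarith
  rw [ENNReal.mul_rpow_of_nonneg _ _ hα0, ← ENNReal.rpow_mul,
    one_div_mul_cancel (by positivity : α ≠ 0), ENNReal.rpow_one]

private lemma pow_helper' {α : ℝ} (hα : 1 < α) (a : ℝ≥0∞) :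
    (a ^ (1/Real.conjExponent α)) ^ Real.conjExponent α = a := by
  have hc := Real.HolderConjugate.conjExponent hα
  rw [← ENNReal.rpow_mul, one_div_mul_cancel hc.symm.ne_zero, ENNReal.rpow_one]

end Aux

/-- If the `α`-th moment (α > 1) of the importance ratio `p/q` under `q` is finite, then
the `α`-th moment of the marginal importance ratio `p_i/q_i` under `q_i` is also finite. -/
theorem marginal_importance_moment_finite {K : ℕ} (p q : (Fin K → ℝ) → ℝ≥0∞)
    (hp : Measurable p) (hq : Measurable q)
    (hp1 : ∫⁻ θ, p θ = 1) (hq1 : ∫⁻ θ, q θ = 1)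
    (habs : ∀ᵐ θ, p θ ≠ 0 → q θ ≠ 0)
    (i : Fin K) (α : ℝ) (hα : 1 < α)
    (hfin : ∫⁻ θ, (p θ / q θ) ^ α * q θ < ⊤) :
    ∫⁻ t : ℝ, (marginalDensity i p t / marginalDensity i q t) ^ α * marginalDensity i q t < ⊤ := by
  classical
  have hc := Real.HolderConjugate.conjExponent hα
  set p' : (Fin K → ℝ) → ℝ≥0∞ := fun θ => p θ / q θ * q θ with hp'def
  have hp'm : Measurable p' := (hp.div hq).mul hq
  have hqfin : ∀ᵐ θ, q θ < ⊤ := ae_lt_top hq (by rw [hq1]; exact one_ne_top)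
  have hp'ae : p' =ᵐ[volume] p := by
    filter_upwards [habs, hqfin] with θ h1 h2
    rcases eq_or_ne (q θ) 0 with hq0 | hq0
    · have hp0 : p θ = 0 := of_not_not fun h => h1 h hq0
      simp [p', hq0, hp0]
    · exact ENNReal.div_mul_cancel hq0 h2.ne
  -- pointwise bound between the two integrands
  have hle : ∀ θ, (p' θ / q θ) ^ α * q θ ≤ (p θ / q θ) ^ α * q θ := by
    intro θ
    rcases eq_or_ne (q θ) 0 with hq0 | hq0
    · simp [hq0]
    rcases eq_or_ne (q θ) ⊤ with hqt | hqt
    · have : p' θ = 0 := by simp [p', hqt, ENNReal.div_top]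
      simp [this, hqt, ENNReal.zero_rpow_of_pos (by linarith : (0:ℝ) < α)]
    · have : p' θ = p θ := ENNReal.div_mul_cancel hq0 hqt
      rw [this]
  -- pointwise identity p' = (p'/q) * q
  have hid : ∀ θ, p' θ = p' θ / q θ * q θ := by
    intro θ
    rcases eq_or_ne (q θ) 0 with hq0 | hq0
    · simp [p', hq0]
    rcases eq_or_ne (q θ) ⊤ with hqt | hqt
    · have : p' θ = 0 := by simp [p', hqt, ENNReal.div_top]
      simp [this, hqt]
    · exact (ENNReal.div_mul_cancel hq0 hqt).symm
  -- Hölder at each t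
  have hA'm : Measurable fun θ => (p' θ / q θ) ^ α * q θ :=
    ((ENNReal.continuous_rpow_const.measurable).comp (hp'm.div hq)).mul hq
  have hAm : Measurable fun θ => (p θ / q θ) ^ α * q θ :=
    ((ENNReal.continuous_rpow_const.measurable).comp (hp.div hq)).mul hq
  have hHolder : ∀ t : ℝ, marginalDensity i q t ≠ ⊤ →
      (marginalDensity i p' t / marginalDensity i q t) ^ α * marginalDensity i q t ≤
        marginalDensity i (fun θ => (p' θ / q θ) ^ α * q θ) t := by
    intro t hBt
    set u : (∀ j : ({i}ᶜ : Finset (Fin K)), ℝ) → (Fin K → ℝ) :=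
      fun y => Function.updateFinset (fun _ => t) ({i}ᶜ : Finset (Fin K)) y with hu
    have hum : Measurable u := measurable_updateFinset
    set ν := Measure.pi fun _ : ({i}ᶜ : Finset (Fin K)) => (volume : Measure ℝ) with hν
    set f1 : (∀ j : ({i}ᶜ : Finset (Fin K)), ℝ) → ℝ≥0∞ :=
      fun y => p' (u y) / q (u y) * (q (u y)) ^ (1/α) with hf1
    set g1 : (∀ j : ({i}ᶜ : Finset (Fin K)), ℝ) → ℝ≥0∞ :=
      fun y => (q (u y)) ^ (1/Real.conjExponent α) with hg1
    have hf1m : Measurable f1 :=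
      ((hp'm.comp hum).div (hq.comp hum)).mul
        ((ENNReal.continuous_rpow_const.measurable).comp (hq.comp hum))
    have hg1m : Measurable g1 :=
      (ENNReal.continuous_rpow_const.measurable).comp (hq.comp hum)
    have hH := ENNReal.lintegral_mul_le_Lp_mul_Lq ν hc hf1m.aemeasurable hg1m.aemeasurable
    have ea : ∫⁻ y, (f1 * g1) y ∂ν = marginalDensity i p' t := by
      refine lintegral_congr fun y => ?_
      show f1 y * g1 y = p' (u y)
      rw [hf1, hg1]
      simp only []
      rw [mul_helper hα (q (u y)) (p' (u y)), ← hid]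
    have eb : ∫⁻ y, f1 y ^ α ∂ν
        = marginalDensity i (fun θ => (p' θ / q θ) ^ α * q θ) t := by
      refine lintegral_congr fun y => ?_
      show f1 y ^ α = (p' (u y) / q (u y)) ^ α * q (u y)
      rw [hf1]
      exact pow_helper hα _ _
    have ec : ∫⁻ y, g1 y ^ Real.conjExponent α ∂ν = marginalDensity i q t := by
      refine lintegral_congr fun y => ?_
      exact pow_helper' hα _
    rw [ea, eb, ec] at hH
    exact arith hα hBt hH
  -- a.e. finiteness of the marginal of q
  have hMq1 : ∫⁻ t : ℝ, marginalDensity i q t = 1 := by rw [marg_lintegral i hq, hq1]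
  have hMqfin : ∀ᵐ t : ℝ, marginalDensity i q t ≠ ⊤ := by
    filter_upwards [ae_lt_top (marg_measurable i hq) (by rw [hMq1]; exact one_ne_top)] with t h
    exact h.ne
  have hcongr := marg_congr_ae i hp'm hp hp'ae
  calc ∫⁻ t : ℝ, (marginalDensity i p t / marginalDensity i q t) ^ α * marginalDensity i q t
      = ∫⁻ t : ℝ, (marginalDensity i p' t / marginalDensity i q t) ^ α * marginalDensity i q t := by
        refine lintegral_congr_ae ?_
        filter_upwards [hcongr] with t h
        rw [h]
    _ ≤ ∫⁻ t : ℝ, marginalDensity i (fun θ => (p' θ / q θ) ^ α * q θ) t := by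
        refine lintegral_mono_ae ?_
        filter_upwards [hMqfin] with t ht
        exact hHolder t ht
    _ ≤ ∫⁻ t : ℝ, marginalDensity i (fun θ => (p θ / q θ) ^ α * q θ) t :=
        lintegral_mono fun t => marg_mono i hle t
    _ = ∫⁻ θ, (p θ / q θ) ^ α * q θ := marg_lintegral i hAm
    _ < ⊤ := hfin
end

section
/- Let θ be one-dimensional. Assume for every dataset y: (i) the variational approximation q(·|y) is symmetric about its mean, (ii) the true posterior p(·|y) is symmetric about its mean, and (iii) q is unbiased, i.e., E_{q(·|y)}[θ] = E_{p(·|y)}[θ]. Then the VSBC p-value Q(θ^{(0)}, y) = Pr_{θ* ∼ q(·|y)}(θ* ≤ θ^{(0)}), with θ^{(0)} ∼ prior and y ∼ p(y|θ^{(0)}), has a symmetric distribution about 1/2: Pr(Q ≤ x) = Pr(Q ≥ 1−x) for all x ∈ [0,1]. -/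
open MeasureTheory ProbabilityTheory Filter


lemma pos_of_strictMono_tendsto {f : ℝ → ℝ} (hm : StrictMono f)
    (hb : Tendsto f atBot (nhds 0)) (t : ℝ) : 0 < f t := by
  by_contra h
  push_neg at h
  have h1 : f (t - 1) < f t := hm (by linarith)
  have h2 : ∀ᶠ s in atBot, f (t - 1) < f s :=
    hb.eventually (eventually_gt_nhds (by linarith))
  have h3 : ∀ᶠ s in atBot, s < t - 1 := eventually_lt_atBot _
  obtain ⟨s, hs1, hs2⟩ := (h2.and h3).exists
  exact absurd (hm hs2) (not_lt.mpr hs1.le)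

lemma lt_one_of_strictMono_tendsto {f : ℝ → ℝ} (hm : StrictMono f)
    (ht : Tendsto f atTop (nhds 1)) (t : ℝ) : f t < 1 := by
  by_contra h
  push_neg at h
  have h1 : f t < f (t + 1) := hm (by linarith)
  have h2 : ∀ᶠ s in atTop, f s < f (t + 1) :=
    ht.eventually (eventually_lt_nhds (by linarith))
  have h3 : ∀ᶠ s in atTop, t + 1 < s := eventually_gt_atTop _
  obtain ⟨s, hs1, hs2⟩ := (h2.and h3).exists
  exact absurd (hm hs2) (not_lt.mpr hs1.le)

lemma exists_preimage {f : ℝ → ℝ} (hc : Continuous f)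
    (hb : Tendsto f atBot (nhds 0)) (ht : Tendsto f atTop (nhds 1))
    {x : ℝ} (hx0 : 0 < x) (hx1 : x < 1) : ∃ c, f c = x := by
  obtain ⟨a, ha⟩ := (hb.eventually (eventually_lt_nhds hx0)).exists
  obtain ⟨b, hb'⟩ := (ht.eventually (eventually_gt_nhds hx1)).exists
  obtain ⟨c, _, hcc⟩ := intermediate_value_uIcc (f := f) (a := a) (b := b)
    hc.continuousOn (Set.mem_uIcc.mpr (Or.inl ⟨ha.le, hb'.le⟩))
  exact ⟨c, hcc⟩


/-- VSBC symmetry: let `ρ` be the joint distribution of `(y, θ⁰)` (so that, given `y`,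
`θ⁰` is a draw from the posterior, whose CDF is `condCDF ρ y`), and let `Fq y` be the
CDF of the variational approximation `q(·|y)`. Assume both `q(·|y)` and the posterior
are symmetric (about `mq y` resp. `mp y`, which are their means) with continuous
strictly increasing CDFs, and that `q` is unbiased (`mq y = mp y` for all `y`). Then
the VSBC p-value `Q = Fq y (θ⁰)` has a distribution symmetric about `1/2`:
`Pr(Q ≤ x) = Pr(Q ≥ 1−x)` for all `x ∈ [0,1]`. -/
theorem vsbc_symmetric {Y : Type*} [MeasurableSpace Y]
    (ρ : Measure (Y × ℝ)) [IsProbabilityMeasure ρ]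
    (Fq : Y → ℝ → ℝ) (mq mp : Y → ℝ)
    (hFq_meas : Measurable fun z : Y × ℝ => Fq z.1 z.2)
    (hFq_cont : ∀ y, Continuous (Fq y))
    (hFq_mono : ∀ y, StrictMono (Fq y))
    (hFq_bot : ∀ y, Tendsto (Fq y) atBot (nhds 0))
    (hFq_top : ∀ y, Tendsto (Fq y) atTop (nhds 1))
    (hFq_symm : ∀ y t, Fq y (mq y + t) = 1 - Fq y (mq y - t))
    (hFp_cont : ∀ y, Continuous fun t => condCDF ρ y t)
    (hFp_mono : ∀ y, StrictMono fun t => condCDF ρ y t)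
    (hFp_symm : ∀ y t, condCDF ρ y (mp y + t) = 1 - condCDF ρ y (mp y - t))
    (hunbiased : ∀ y, mq y = mp y) :
    ∀ x ∈ Set.Icc (0 : ℝ) 1,
      ρ {z : Y × ℝ | Fq z.1 z.2 ≤ x} = ρ {z : Y × ℝ | 1 - x ≤ Fq z.1 z.2} := by
  intro x hx
  obtain ⟨hx0, hx1⟩ := hx
  -- measurability of the two sets
  have hS : MeasurableSet {z : Y × ℝ | Fq z.1 z.2 ≤ x} :=
    hFq_meas measurableSet_Iic
  have hT : MeasurableSet {z : Y × ℝ | 1 - x ≤ Fq z.1 z.2} :=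
    hFq_meas measurableSet_Ici
  -- disintegration of ρ via condCDF
  have hdis : ∀ (s : Set (Y × ℝ)), MeasurableSet s →
      ρ s = ∫⁻ b, (condCDF ρ b).measure {t | (b, t) ∈ s} ∂ρ.fst := by
    intro s hs
    have hf := isCondKernelCDF_condCDF ρ
    have := lintegral_toKernel_mem hf () hs
    simp only [Kernel.const_apply] at this
    rw [← this]
    rfl
  rw [hdis _ hS, hdis _ hT]
  refine lintegral_congr fun y => ?_
  -- pointwise equality for each y
  rcases eq_or_lt_of_le hx0 with h0 | h0
  · -- x = 0
    have e1 : {t : ℝ | Fq y t ≤ x} = ∅ := by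
      ext t
      simp only [Set.mem_setOf_eq, Set.mem_empty_iff_false, iff_false, not_le, ← h0]
      exact pos_of_strictMono_tendsto (hFq_mono y) (hFq_bot y) t
    have e2 : {t : ℝ | 1 - x ≤ Fq y t} = ∅ := by
      ext t
      simp only [Set.mem_setOf_eq, Set.mem_empty_iff_false, iff_false, not_le, ← h0, sub_zero]
      exact lt_one_of_strictMono_tendsto (hFq_mono y) (hFq_top y) t
    simp only [Set.mem_setOf_eq]
    rw [show {t | Fq (y, t).1 (y, t).2 ≤ x} = ∅ from e1,
      show {t | 1 - x ≤ Fq (y, t).1 (y, t).2} = ∅ from e2]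
  rcases eq_or_lt_of_le hx1 with h1 | h1
  · -- x = 1
    have e1 : {t : ℝ | Fq y t ≤ x} = Set.univ := by
      ext t
      simp only [Set.mem_setOf_eq, Set.mem_univ, iff_true, h1]
      exact (lt_one_of_strictMono_tendsto (hFq_mono y) (hFq_top y) t).le
    have e2 : {t : ℝ | 1 - x ≤ Fq y t} = Set.univ := by
      ext t
      simp only [Set.mem_setOf_eq, Set.mem_univ, iff_true, h1, sub_self]
      exact (pos_of_strictMono_tendsto (hFq_mono y) (hFq_bot y) t).le
    rw [show {t | (y, t) ∈ {z : Y × ℝ | Fq z.1 z.2 ≤ x}} = Set.univ from e1,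
      show {t | (y, t) ∈ {z : Y × ℝ | 1 - x ≤ Fq z.1 z.2}} = Set.univ from e2]
  -- 0 < x < 1
  obtain ⟨c, hc⟩ := exists_preimage (hFq_cont y) (hFq_bot y) (hFq_top y) h0 h1
  obtain ⟨c', hc'⟩ := exists_preimage (hFq_cont y) (hFq_bot y) (hFq_top y)
    (by linarith) (by linarith : 1 - x < 1)
  have e1 : {t : ℝ | Fq y t ≤ x} = Set.Iic c := by
    ext t
    simp only [Set.mem_setOf_eq, Set.mem_Iic, ← hc, (hFq_mono y).le_iff_le]
  have e2 : {t : ℝ | 1 - x ≤ Fq y t} = Set.Ici c' := by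
    ext t
    simp only [Set.mem_setOf_eq, Set.mem_Ici, ← hc', (hFq_mono y).le_iff_le]
  -- relate c and c' through the symmetry of Fq
  have hcc' : c' = 2 * mq y - c := by
    have h := hFq_symm y (c - mq y)
    rw [show mq y + (c - mq y) = c by ring, hc] at h
    have : Fq y (2 * mq y - c) = 1 - x := by
      rw [show 2 * mq y - c = mq y - (c - mq y) by ring]; linarith
    exact (hFq_mono y).injective (hc'.trans this.symm)
  -- compute measures via the Stieltjes CDF
  have hleft : ∀ t : ℝ, Function.leftLim (condCDF ρ y) t = condCDF ρ y t := fun t =>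
    leftLim_eq_of_tendsto
      (((hFp_cont y).tendsto t).mono_left nhdsWithin_le_nhds)
  rw [show {t | (y, t) ∈ {z : Y × ℝ | Fq z.1 z.2 ≤ x}} = Set.Iic c from e1,
    show {t | (y, t) ∈ {z : Y × ℝ | 1 - x ≤ Fq z.1 z.2}} = Set.Ici c' from e2,
    StieltjesFunction.measure_Iic _ (tendsto_condCDF_atBot ρ y),
    StieltjesFunction.measure_Ici _ (tendsto_condCDF_atTop ρ y), hleft]
  -- symmetry of the posterior CDF
  have hp := hFp_symm y (c - mp y)
  rw [show mp y + (c - mp y) = c by ring] at hp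
  have : condCDF ρ y c' = condCDF ρ y (mp y - (c - mp y)) := by
    rw [hcc', hunbiased y]; ring_nf
  rw [this]
  congr 1
  linarith
end
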